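/- Let S be a nonempty semigroup such that S \ E(S) is finite, and let T be an S-valued sequence of length |S \ E(S)| with Π(T) ∩ E(S) = ∅. Then there is an enumeration x_1, ..., x_k of the distinct elements of supp(T) such that: the subsemigroup ⟨supp(T)⟩ generated by supp(T) equals ⋃_{i=1}^k ⟨x_i⟩ and is commutative; x_i * x_j = x_j for all 1 ≤ i < j ≤ k; the sets of non-idempotent elements of the cyclic subsemigroups ⟨x_i⟩ are pairwise disjoint; every element of S outside ⟨supp(T)⟩ is an idempotent; and for each i, ⟨x_i⟩ is finite with I(x_i) ≡ 1 (mod P(x_i)) and v_{x_i}(T) = I(x_i) + P(x_i) − 2. -/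

import Mathlib

/-- Product, in order, of the nonempty list `a :: l` in a semigroup. -/
def sprod {S : Type*} [Mul S] (a : S) (l : List S) : S := l.foldl (· * ·) a

/-- `pow1 x n = x^(n+1)`: the `(n+1)`-st power of `x` in a semigroup. -/
def pow1 {S : Type*} [Mul S] (x : S) : ℕ → S := fun n => Nat.rec x (fun _ y => y * x) n

/-- `Π(T)`: the set of products, in order, of nonempty lists which are
permutations of order-preserving sublists of `T`. -/
def PiSet {S : Type*} [Mul S] (T : List S) : Set S :=
  {s | ∃ u : List S, u.Sublist T ∧ ∃ a l, (a :: l).Perm u ∧ sprod a l = s}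

/-- `A(L)`: the set of products, in order, of nonempty order-preserving sublists of `L`. -/
def ASet {S : Type*} [Mul S] (L : List S) : Set S :=
  {s | ∃ a l, (a :: l).Sublist L ∧ sprod a l = s}

/-- `HasIndexPeriod x r p` says that `r` is the index of `x` (the least `r > 0` such
that `x^r = x^t` for some positive `t ≠ r`) and `p` is the period of `x` (the least
`p > 0` with `x^(r+p) = x^r`). Powers are expressed via `pow1 x (n-1) = x^n`. -/
def HasIndexPeriod {S : Type*} [Mul S] (x : S) (r p : ℕ) : Prop :=
  (0 < r ∧ (∃ t, 0 < t ∧ t ≠ r ∧ pow1 x (t - 1) = pow1 x (r - 1)) ∧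
    ∀ r', 0 < r' → (∃ t, 0 < t ∧ t ≠ r' ∧ pow1 x (t - 1) = pow1 x (r' - 1)) → r ≤ r') ∧
  (0 < p ∧ pow1 x (r + p - 1) = pow1 x (r - 1) ∧
    ∀ p', 0 < p' → pow1 x (r + p' - 1) = pow1 x (r - 1) → p ≤ p')

section Basics
variable {S : Type*} [Semigroup S]

theorem sprod_cons (a b : S) (l : List S) : sprod a (b :: l) = sprod (a * b) l := rfl

theorem mul_sprod (t : S) : ∀ (l : List S) (a : S), t * sprod a l = sprod (t * a) l := by
  intro l
  induction l with
  | nil => intro a; rfl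
  | cons b l ih =>
    intro a
    rw [sprod_cons, sprod_cons, ih, mul_assoc]

theorem sprod_eq_mul (a b : S) (l : List S) : sprod a (b :: l) = a * sprod b l := by
  rw [mul_sprod]; rfl

@[simp] theorem pow1_zero (x : S) : pow1 x 0 = x := rfl
@[simp] theorem pow1_succ (x : S) (n : ℕ) : pow1 x (n + 1) = pow1 x n * x := rfl

theorem pow1_add (x : S) (m n : ℕ) : pow1 x (m + n + 1) = pow1 x m * pow1 x n := by
  induction n with
  | zero => rfl
  | succ n ih => rw [show m + (n+1) + 1 = (m + n + 1) + 1 by ring, pow1_succ, ih, pow1_succ,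
      mul_assoc]

theorem sprod_replicate (x : S) : ∀ n, sprod x (List.replicate n x) = pow1 x n := by
  intro n
  induction n with
  | zero => rfl
  | succ n ih =>
    rw [List.replicate_succ', show List.replicate n x ++ [x] = List.replicate n x ++ [x] from rfl]
    unfold sprod at *
    rw [List.foldl_append, ih]
    rfl

theorem mem_piSet_iff {T : List S} {s : S} :
    s ∈ PiSet T ↔ ∃ a l, (a :: l).Subperm T ∧ sprod a l = s := by
  constructor
  · rintro ⟨u, hu, a, l, hperm, hs⟩
    exact ⟨a, l, ⟨u, hperm.symm, hu⟩, hs⟩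
  · rintro ⟨a, l, ⟨u, hperm, hu⟩, hs⟩
    exact ⟨u, hu, a, l, hperm.symm, hs⟩

theorem piSet_mono {T₁ T₂ : List S} (h : T₁.Subperm T₂) : PiSet T₁ ⊆ PiSet T₂ := by
  intro s hs
  rw [mem_piSet_iff] at hs ⊢
  obtain ⟨a, l, hsub, hp⟩ := hs
  exact ⟨a, l, hsub.trans h, hp⟩

theorem piSet_mono_sublist {T₁ T₂ : List S} (h : T₁.Sublist T₂) : PiSet T₁ ⊆ PiSet T₂ :=
  piSet_mono h.subperm

theorem piSet_perm {T₁ T₂ : List S} (h : T₁.Perm T₂) : PiSet T₁ = PiSet T₂ :=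
  Set.Subset.antisymm (piSet_mono h.subperm) (piSet_mono h.symm.subperm)

theorem mem_piSet_of_mem {T : List S} {a : S} (h : a ∈ T) : a ∈ PiSet T := by
  rw [mem_piSet_iff]
  exact ⟨a, [], List.singleton_subperm_iff.mpr h, rfl⟩

theorem mul_mem_piSet_cons {L : List S} {s : S} (t : S) (hs : s ∈ PiSet L) :
    t * s ∈ PiSet (t :: L) := by
  rw [mem_piSet_iff] at hs ⊢
  obtain ⟨a, l, hsub, hp⟩ := hs
  exact ⟨t, a :: l, (List.subperm_cons t).mpr hsub, by rw [sprod_eq_mul, hp]⟩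

theorem mem_piSet_cons_self (t : S) (L : List S) : t ∈ PiSet (t :: L) :=
  mem_piSet_of_mem (List.mem_cons_self (a := t) (l := L))

theorem piSet_subset_closure (T : List S) :
    PiSet T ⊆ (Subsemigroup.closure {s : S | s ∈ T} : Set S) := by
  intro s hs
  rw [mem_piSet_iff] at hs
  obtain ⟨a, l, hsub, hp⟩ := hs
  subst hp
  have hmem : ∀ y ∈ (a :: l), y ∈ T := fun y hy => hsub.subset hy
  clear hsub
  induction l generalizing a with
  | nil => exact Subsemigroup.subset_closure (hmem a (by simp))
  | cons b l ih =>
    rw [sprod_eq_mul]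
    exact Subsemigroup.mul_mem _ (Subsemigroup.subset_closure (hmem a (by simp)))
      (ih b (fun y hy => hmem y (by simp at hy ⊢; tauto)))

end Basics

section Cyclic
variable {S : Type*} [Semigroup S]



theorem idem_pow_shift {x : S} {a : ℕ} (h : pow1 x a * pow1 x a = pow1 x a) :
    ∀ k, pow1 x (a + k * (a + 1)) = pow1 x a := by
  intro k
  induction k with
  | zero => simp
  | succ k ih =>
    rw [show a + (k+1) * (a+1) = (a + k * (a+1)) + a + 1 by ring, pow1_add, ih, h]

/-- at most one idempotent value among the powers of `x` -/
theorem idem_pow_unique {x : S} {a b : ℕ} (ha : pow1 x a * pow1 x a = pow1 x a)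
    (hb : pow1 x b * pow1 x b = pow1 x b) : pow1 x a = pow1 x b := by
  have h1 := idem_pow_shift ha b
  have h2 := idem_pow_shift hb a
  rw [← h1, ← h2]
  congr 1
  ring

theorem range_pow1_finite (hfin : {x : S | x * x ≠ x}.Finite) (x : S) :
    (Set.range (pow1 x)).Finite := by
  have : Set.range (pow1 x) ⊆ {y : S | y * y ≠ y} ∪ (Set.range (pow1 x) ∩ {y | y * y = y}) := by
    intro y hy
    by_cases h : y * y = y
    · exact Or.inr ⟨hy, h⟩
    · exact Or.inl h
  refine Set.Finite.subset (hfin.union ?_) this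
  apply Set.Subsingleton.finite
  rintro y ⟨⟨a, rfl⟩, hy⟩ z ⟨⟨b, rfl⟩, hz⟩
  exact idem_pow_unique hy hz

theorem exists_hasIndexPeriod (hfin : {x : S | x * x ≠ x}.Finite) (x : S) :
    ∃ r p, HasIndexPeriod x r p := by
  classical
  have hFin : Finite (Set.range (pow1 x)) := (range_pow1_finite hfin x).to_subtype
  have hninj : ∃ a b : ℕ, a ≠ b ∧ pow1 x a = pow1 x b := by
    obtain ⟨a, b, hne, h⟩ := Finite.exists_ne_map_eq_of_infinite
      (fun n : ℕ => (⟨pow1 x n, Set.mem_range_self n⟩ : Set.range (pow1 x)))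
    exact ⟨a, b, hne, by simpa using congrArg Subtype.val h⟩
  set P : ℕ → Prop := fun r' => 0 < r' ∧ ∃ t, 0 < t ∧ t ≠ r' ∧ pow1 x (t - 1) = pow1 x (r' - 1)
    with hP
  have hPex : ∃ r', P r' := by
    obtain ⟨a, b, hne, h⟩ := hninj
    exact ⟨a + 1, Nat.succ_pos a, b + 1, Nat.succ_pos b, by omega, by simpa using h.symm⟩
  set r := Nat.find hPex with hr
  obtain ⟨hrpos, t, htpos, htne, hteq⟩ := Nat.find_spec hPex
  have hrmin : ∀ r', 0 < r' → (∃ t, 0 < t ∧ t ≠ r' ∧ pow1 x (t - 1) = pow1 x (r' - 1)) → r ≤ r' :=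
    fun r' h1 h2 => Nat.find_min' hPex ⟨h1, h2⟩
  have hrt : r < t := by
    rcases lt_trichotomy t r with h | h | h
    · exact absurd (hrmin t htpos ⟨r, hrpos, by omega, hteq.symm⟩) (by omega)
    · omega
    · exact h
  have hQex : ∃ p', 0 < p' ∧ pow1 x (r + p' - 1) = pow1 x (r - 1) :=
    ⟨t - r, by omega, by rw [show r + (t - r) - 1 = t - 1 by omega]; exact hteq⟩
  set p := Nat.find hQex with hp
  obtain ⟨hppos, hpeq⟩ := Nat.find_spec hQex
  exact ⟨r, p, ⟨hrpos, ⟨t, htpos, htne, hteq⟩, hrmin⟩,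
    hppos, hpeq, fun p' h1 h2 => Nat.find_min' hQex ⟨h1, h2⟩⟩

variable {x : S} {r p : ℕ} (hip : HasIndexPeriod x r p)

section
include hip

theorem hip_rpos : 0 < r := hip.1.1
theorem hip_ppos : 0 < p := hip.2.1

/-- basic periodicity: with q = r - 1, `pow1 (q+p+c) = pow1 (q+c)` -/
theorem hip_per (c : ℕ) : pow1 x ((r - 1) + p + c) = pow1 x ((r - 1) + c) := by
  induction c with
  | zero =>
    have h := hip.2.2.1
    have hr1 := hip.1.1
    rw [show r + p - 1 = (r - 1) + p by omega, show (r-1) + p + 0 = (r-1) + p by ring] at *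
    exact h
  | succ c ih =>
    rw [show (r-1) + p + (c+1) = ((r-1) + p + c) + 1 by ring, pow1_succ, ih]
    rfl

theorem hip_per_k (c k : ℕ) : pow1 x ((r - 1) + c + k * p) = pow1 x ((r - 1) + c) := by
  induction k with
  | zero => simp
  | succ k ih =>
    rw [show (r-1) + c + (k+1)*p = (r-1) + p + (c + k * p) by ring, hip_per hip,
      show (r-1) + (c + k * p) = (r-1) + c + k * p by ring, ih]

/-- if two distinct powers agree then both exponents are ≥ q = r - 1 -/
theorem hip_index_min {a b : ℕ} (hne : a ≠ b) (heq : pow1 x a = pow1 x b) : r - 1 ≤ a := by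
  have := hip.1.2.2 (a + 1) (Nat.succ_pos a) ⟨b + 1, Nat.succ_pos b, by omega, by simpa using heq.symm⟩
  omega

/-- the powers x^1, ..., x^(r+p-1), i.e. pow1 indices 0..(r-1)+p-1, are distinct -/
theorem hip_inj {a b : ℕ} (hab : a < b) (hb : b < (r - 1) + p) (heq : pow1 x a = pow1 x b) :
    False := by
  have hqa : r - 1 ≤ a := hip_index_min hip (by omega) heq
  set q := r - 1 with hq
  set d := b - a with hd
  set s := a - q with hs
  have hdpos : 0 < d := by omega
  have hdlt : d < p := by omega
  -- d-periodicity from index a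
  have dper : ∀ c, pow1 x (a + c) = pow1 x (a + d + c) := by
    intro c
    induction c with
    | zero => simpa [show a + d = b by omega] using heq
    | succ c ih => rw [show a + (c+1) = (a+c)+1 by ring, show a + d + (c+1) = (a+d+c)+1 by ring,
        pow1_succ, pow1_succ, ih]
  have key : pow1 x (q + d) = pow1 x q := by
    have h1 : pow1 x (q + d) = pow1 x (q + d + s * p) := (hip_per_k hip d s).symm
    have h2 : q + d + s * p = a + d + (s * p - s) := by
      have : s ≤ s * p := Nat.le_mul_of_pos_right s (hip_ppos hip)
      omega
    have h3 : pow1 x (a + (s * p - s)) = pow1 x (a + d + (s * p - s)) := dper _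
    have h4 : a + (s * p - s) = q + 0 + s * p := by
      have : s ≤ s * p := Nat.le_mul_of_pos_right s (hip_ppos hip)
      omega
    rw [h1, h2, ← h3, h4, hip_per_k hip 0 s]
    congr 1
  have hr1 : 0 < r := hip_rpos hip
  have := hip.2.2.2 d hdpos (by rw [show r + d - 1 = q + d by omega, show r - 1 = q from rfl, key])
  omega

/-- every power equals one with exponent < (r-1) + p -/
theorem hip_reduce (n : ℕ) : ∃ m, m < (r - 1) + p ∧ pow1 x n = pow1 x m := by
  rcases lt_or_ge n ((r - 1) + p) with h | h
  · exact ⟨n, h, rfl⟩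
  · set q := r - 1
    set c := n - q with hc
    refine ⟨q + c % p, by have := Nat.mod_lt c (hip_ppos hip); omega, ?_⟩
    have : n = q + c % p + (c / p) * p := by
      have h1 := Nat.mod_add_div c p
      have h2 : c / p * p = p * (c / p) := Nat.mul_comm _ _
      have hr1 := hip_rpos hip
      omega
    rw [this, hip_per_k hip]

theorem hip_range_eq : Set.range (pow1 x) = pow1 x '' {n | n < (r - 1) + p} := by
  apply Set.Subset.antisymm
  · rintro y ⟨n, rfl⟩
    obtain ⟨m, hm, hmeq⟩ := hip_reduce hip n
    exact ⟨m, hm, hmeq.symm⟩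
  · rintro y ⟨n, _, rfl⟩
    exact Set.mem_range_self n

/-- any exponent a₀ ≥ r divisible by p gives an idempotent power -/
theorem hip_idem (a₀ : ℕ) (hge : r ≤ a₀) (hdvd : p ∣ a₀) :
    pow1 x (a₀ - 1) * pow1 x (a₀ - 1) = pow1 x (a₀ - 1) := by
  obtain ⟨k, hk⟩ := hdvd
  have hr1 := hip_rpos hip
  have h1 : (a₀ - 1) + (a₀ - 1) + 1 = (r - 1) + (a₀ - r) + k * p := by
    have h2 : k * p = p * k := Nat.mul_comm _ _
    omega
  rw [← pow1_add, h1, hip_per_k hip, show (r-1)+(a₀-r) = a₀ - 1 by omega]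

theorem hip_idem_ex : ∃ a₀, 0 < a₀ ∧ p ∣ a₀ ∧ r ≤ a₀ ∧
    pow1 x (a₀ - 1) * pow1 x (a₀ - 1) = pow1 x (a₀ - 1) := by
  have hr1 := hip_rpos hip
  have hp1 := hip_ppos hip
  refine ⟨r * p, Nat.mul_pos hr1 hp1, ⟨r, mul_comm r p⟩,
    Nat.le_mul_of_pos_right r hp1, hip_idem hip _ (Nat.le_mul_of_pos_right r hp1) ⟨r, mul_comm r p⟩⟩

end
end Cyclic

section Grow
open List in
theorem _dummy : True := trivial
open List
variable {S : Type*} [Semigroup S]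

theorem piSet_nil : PiSet ([] : List S) = ∅ := by
  ext s
  simp only [PiSet, Set.mem_setOf_eq, Set.mem_empty_iff_false, iff_false]
  rintro ⟨u, hu, a, l, hperm, -⟩
  rw [List.sublist_nil] at hu
  subst hu
  exact absurd hperm.length_eq (by simp)

theorem pow1_eq_self_mul (t : S) (k : ℕ) : pow1 t (k + 1) = t * pow1 t k := by
  have := pow1_add t 0 k
  simpa using this

theorem pow_mem_of_eq {t : S} {L : List S} (h : PiSet (t :: L) = PiSet L) (k : ℕ) :
    pow1 t k ∈ PiSet L := by
  induction k with
  | zero => exact h ▸ mem_piSet_cons_self t L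
  | succ k ih =>
    rw [pow1_eq_self_mul]
    exact h ▸ mul_mem_piSet_cons t ih

theorem piSet_cons_ne (hfin : {x : S | x * x ≠ x}.Finite) (t : S) (L : List S)
    (hE : PiSet (t :: L) ∩ {e : S | e * e = e} = ∅) : PiSet L ≠ PiSet (t :: L) := by
  intro h
  obtain ⟨r, p, hip⟩ := exists_hasIndexPeriod hfin t
  obtain ⟨a₀, ha₀, -, -, hidem⟩ := hip_idem_ex hip
  have hmem : pow1 t (a₀ - 1) ∈ PiSet (t :: L) :=
    piSet_mono_sublist (List.sublist_cons_self t L) (pow_mem_of_eq h.symm (a₀ - 1))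
  have : pow1 t (a₀ - 1) ∈ PiSet (t :: L) ∩ {e : S | e * e = e} := ⟨hmem, hidem⟩
  rw [hE] at this
  exact this

theorem piSet_cons_card (hfin : {x : S | x * x ≠ x}.Finite) (t : S) (L : List S)
    (hE : PiSet (t :: L) ∩ {e : S | e * e = e} = ∅) (hf : (PiSet (t :: L)).Finite) :
    (PiSet L).ncard + 1 ≤ (PiSet (t :: L)).ncard := by
  have hss : PiSet L ⊂ PiSet (t :: L) :=
    ⟨piSet_mono_sublist (List.sublist_cons_self t L), fun h =>
      piSet_cons_ne hfin t L hE (Set.Subset.antisymm (piSet_mono_sublist (List.sublist_cons_self t L)) h)⟩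
  exact Set.ncard_lt_ncard hss hf

theorem sublist_intermediate {α : Type*} : ∀ {u v : List α}, u <+ v → u.length < v.length →
    ∃ w, u <+ w ∧ w <+ v ∧ w.length + 1 = v.length := by
  intro u v h
  induction h with
  | slnil => intro h; simp at h
  | @cons l₁ l₂ a h ih =>
    intro _
    exact ⟨l₂, h, List.sublist_cons_self a l₂, by simp⟩
  | @cons_cons l₁ l₂ a h ih =>
    intro hlen
    obtain ⟨w, h1, h2, h3⟩ := ih (by simpa using hlen)
    exact ⟨a :: w, h1.cons₂ a, h2.cons₂ a, by simp [h3]⟩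

theorem sublist_succ_perm {α : Type*} : ∀ {w v : List α}, w <+ v → w.length + 1 = v.length →
    ∃ t, v.Perm (t :: w) := by
  intro w v h
  induction h with
  | slnil => simp
  | @cons l₁ l₂ a h ih =>
    intro hlen
    have : l₁ = l₂ := h.eq_of_length (by simpa using hlen)
    subst this
    exact ⟨a, List.Perm.refl _⟩
  | @cons_cons l₁ l₂ a h ih =>
    intro hlen
    obtain ⟨t, ht⟩ := ih (by simpa using hlen)
    exact ⟨t, (ht.cons a).trans (List.Perm.swap t a l₁)⟩

theorem grow (hfin : {x : S | x * x ≠ x}.Finite) :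
    ∀ (n : ℕ) (u v : List S), v.length - u.length = n → u <+ v →
      PiSet v ∩ {e : S | e * e = e} = ∅ → (PiSet v).Finite →
      (PiSet u).ncard + n ≤ (PiSet v).ncard := by
  intro n
  induction n with
  | zero =>
    intro u v hn hsub _ _
    have : u = v := hsub.eq_of_length (by have := hsub.length_le; omega)
    subst this
    simp
  | succ n ih =>
    intro u v hn hsub hE hf
    obtain ⟨w, h1, h2, h3⟩ := sublist_intermediate hsub (by omega)
    obtain ⟨t, ht⟩ := sublist_succ_perm h2 h3
    have hvperm : PiSet v = PiSet (t :: w) := piSet_perm ht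
    have hEw : PiSet w ∩ {e : S | e * e = e} = ∅ :=
      Set.eq_empty_of_subset_empty (hE ▸ Set.inter_subset_inter_left _ (piSet_mono_sublist h2))
    have hfw : (PiSet w).Finite := hf.subset (piSet_mono_sublist h2)
    have step : (PiSet w).ncard + 1 ≤ (PiSet v).ncard := by
      rw [hvperm]
      exact piSet_cons_card hfin t w (hvperm ▸ hE) (hvperm ▸ hf)
    have ihw := ih u w (by omega) h1 hEw hfw
    omega

end Grow

section Absorb
variable {S : Type*} [Semigroup S] {a b : S}

theorem absorb_left (h1 : a * b = b) : ∀ d, a * pow1 b d = pow1 b d := by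
  intro d
  induction d with
  | zero => exact h1
  | succ d ih => rw [pow1_succ, ← mul_assoc, ih]

theorem absorb_left' (h1 : a * b = b) : ∀ c d, pow1 a c * pow1 b d = pow1 b d := by
  intro c d
  induction c with
  | zero => exact absorb_left h1 d
  | succ c ih => rw [pow1_succ, mul_assoc, absorb_left h1, ih]

theorem absorb_right (h2 : b * a = b) : ∀ d, pow1 b d * a = pow1 b d := by
  intro d
  induction d with
  | zero => exact h2
  | succ d ih => rw [pow1_succ, mul_assoc, h2]

theorem absorb_right' (h2 : b * a = b) : ∀ d c, pow1 b d * pow1 a c = pow1 b d := by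
  intro d c
  induction c with
  | zero => exact absorb_right h2 d
  | succ c ih => rw [pow1_succ, ← mul_assoc, ih, absorb_right h2]

end Absorb

section Main
variable {S : Type*} [Semigroup S] {T : List S}

theorem hE_mono {u : List S} (h : u.Subperm T)
    (hfree : PiSet T ∩ {e : S | e * e = e} = ∅) : PiSet u ∩ {e : S | e * e = e} = ∅ :=
  Set.eq_empty_of_subset_empty (hfree ▸ Set.inter_subset_inter_left _ (piSet_mono h))

theorem piSet_T_subset (hfree : PiSet T ∩ {e : S | e * e = e} = ∅) :
    PiSet T ⊆ {x : S | x * x ≠ x} := by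
  intro s hs he
  have : s ∈ PiSet T ∩ {e : S | e * e = e} := ⟨hs, not_not.mp (by simpa using he)⟩
  rw [hfree] at this
  exact this

theorem card_piSet_eq (hfin : {x : S | x * x ≠ x}.Finite)
    (hlen : T.length = {x : S | x * x ≠ x}.ncard)
    (hfree : PiSet T ∩ {e : S | e * e = e} = ∅)
    {u : List S} (h : u.Subperm T) : (PiSet u).ncard = u.length := by
  obtain ⟨u', hperm, hsub⟩ := h
  have hpe : PiSet u' = PiSet u := piSet_perm hperm
  have hfinT : (PiSet T).Finite := hfin.subset (piSet_T_subset hfree)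
  have hf' : (PiSet u').Finite := hfinT.subset (piSet_mono_sublist hsub)
  have hE' : PiSet u' ∩ {e : S | e * e = e} = ∅ := hE_mono hsub.subperm hfree
  have hlower := grow hfin u'.length [] u' (by simp) (List.nil_sublist u') hE' hf'
  rw [piSet_nil, Set.ncard_empty] at hlower
  have hupper := grow hfin (T.length - u'.length) u' T rfl hsub hfree hfinT
  have hcardT : (PiSet T).ncard ≤ T.length := by
    rw [hlen]
    exact Set.ncard_le_ncard (piSet_T_subset hfree) hfin
  have hlen' : u'.length ≤ T.length := hsub.length_le
  have hlu : u'.length = u.length := hperm.length_eq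
  rw [← hpe]
  omega

theorem piSet_T_eq (hfin : {x : S | x * x ≠ x}.Finite)
    (hlen : T.length = {x : S | x * x ≠ x}.ncard)
    (hfree : PiSet T ∩ {e : S | e * e = e} = ∅) : PiSet T = {x : S | x * x ≠ x} := by
  apply Set.eq_of_subset_of_ncard_le (piSet_T_subset hfree) _ hfin
  rw [← hlen, card_piSet_eq hfin hlen hfree (List.Subperm.refl T)]

theorem mem_nonidem (hfree : PiSet T ∩ {e : S | e * e = e} = ∅) {s : S} (hs : s ∈ T) :
    s * s ≠ s := piSet_T_subset hfree (mem_piSet_of_mem hs)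

theorem pair_comm [DecidableEq S] (hfin : {x : S | x * x ≠ x}.Finite)
    (hlen : T.length = {x : S | x * x ≠ x}.ncard)
    (hfree : PiSet T ∩ {e : S | e * e = e} = ∅)
    {x y : S} (hx : x ∈ T) (hy : y ∈ T) (hne : x ≠ y) :
    x * y = y * x ∧ (x * y = x ∨ x * y = y) := by
  have hsub : [x, y].Subperm T := by
    rw [List.subperm_ext_iff]
    intro a ha
    simp only [List.mem_cons, List.not_mem_nil, or_false] at ha
    rcases ha with rfl | rfl
    · have : List.count a [a, y] = 1 := by simp [List.count_cons, hne.symm]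
      rw [this]
      exact List.count_pos_iff.mpr hx
    · have : List.count a [x, a] = 1 := by simp [List.count_cons, hne]
      rw [this]
      exact List.count_pos_iff.mpr hy
  have hcard : (PiSet [x, y]).ncard = 2 := by
    rw [card_piSet_eq hfin hlen hfree hsub]; rfl
  have hxy_mem : x ∈ PiSet [x, y] := mem_piSet_of_mem (by simp)
  have hy_mem : y ∈ PiSet [x, y] := mem_piSet_of_mem (by simp)
  have hfinP : (PiSet [x, y]).Finite :=
    (hfin.subset (piSet_T_subset hfree)).subset (piSet_mono hsub)
  have hPeq : PiSet [x, y] = {x, y} := by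
    symm
    apply Set.eq_of_subset_of_ncard_le _ _ hfinP
    · intro s hs
      rcases hs with rfl | rfl
      · exact hxy_mem
      · exact hy_mem
    · rw [hcard, Set.ncard_pair hne]
  have hmul_mem : x * y ∈ PiSet [x, y] := by
    rw [mem_piSet_iff]
    exact ⟨x, [y], List.Subperm.refl _, rfl⟩
  have hmul_mem' : y * x ∈ PiSet [x, y] := by
    rw [mem_piSet_iff]
    exact ⟨y, [x], (List.Perm.swap x y []).subperm, rfl⟩
  rw [hPeq] at hmul_mem hmul_mem'
  simp only [Set.mem_insert_iff, Set.mem_singleton_iff] at hmul_mem hmul_mem'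
  have hxx : x * x ≠ x := mem_nonidem hfree hx
  have hyy : y * y ≠ y := mem_nonidem hfree hy
  rcases hmul_mem with h1 | h1 <;> rcases hmul_mem' with h2 | h2
  · exact ⟨by rw [h1, h2], Or.inl h1⟩
  · -- x*y = x, y*x = y : then x*x = x
    exfalso
    apply hxx
    calc x * x = (x * y) * x := by rw [h1]
    _ = x * (y * x) := mul_assoc x y x
    _ = x * y := by rw [h2]
    _ = x := h1
  · -- x*y = y, y*x = x : then y*y = y
    exfalso
    apply hyy
    calc y * y = y * (x * y) := by rw [h1]
    _ = (y * x) * y := (mul_assoc y x y).symm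
    _ = x * y := by rw [h2]
    _ = y := h1
  · exact ⟨by rw [h1, h2], Or.inr h1⟩

theorem exists_max [DecidableEq S] (hfin : {x : S | x * x ≠ x}.Finite)
    (hlen : T.length = {x : S | x * x ≠ x}.ncard)
    (hfree : PiSet T ∩ {e : S | e * e = e} = ∅) :
    ∀ (F : Finset S), (∀ s ∈ F, s ∈ T) → F.Nonempty →
      ∃ z ∈ F, ∀ w ∈ F, w ≠ z → w * z = z := by
  intro F
  induction F using Finset.induction_on with
  | empty => intro _ h; exact absurd h (by simp)
  | @insert a F' ha ih =>
    intro hsubT _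
    rcases F'.eq_empty_or_nonempty with rfl | hne
    · exact ⟨a, by simp, fun w hw hwa => by simp at hw; exact absurd hw hwa⟩
    · obtain ⟨z', hz'F, hz'max⟩ := ih (fun s hs => hsubT s (by simp [hs])) hne
      have haT : a ∈ T := hsubT a (by simp)
      have hz'T : z' ∈ T := hsubT z' (by simp [hz'F])
      have hnea : a ≠ z' := fun h => ha (h ▸ hz'F)
      obtain ⟨hcomm, hor⟩ := pair_comm hfin hlen hfree haT hz'T hnea
      rcases hor with h | h
      · -- a * z' = a : a is max
        refine ⟨a, by simp, fun w hw hwa => ?_⟩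
        simp only [Finset.mem_insert] at hw
        rcases hw with rfl | hw
        · exact absurd rfl hwa
        · by_cases hwz : w = z'
          · subst hwz
            rw [← hcomm, h]
          · have hwz' : w * z' = z' := hz'max w hw hwz
            calc w * a = w * (z' * a) := by rw [← hcomm, h]
            _ = (w * z') * a := by rw [mul_assoc]
            _ = z' * a := by rw [hwz']
            _ = a := by rw [← hcomm, h]
      · -- a * z' = z' : z' still max
        refine ⟨z', by simp [hz'F], fun w hw hwz => ?_⟩
        simp only [Finset.mem_insert] at hw
        rcases hw with rfl | hw
        · exact h
        · exact hz'max w hw hwz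

theorem exists_chain [DecidableEq S] (hfin : {x : S | x * x ≠ x}.Finite)
    (hlen : T.length = {x : S | x * x ≠ x}.ncard)
    (hfree : PiSet T ∩ {e : S | e * e = e} = ∅) :
    ∃ l : List S, l.Nodup ∧ (∀ s, s ∈ l ↔ s ∈ T) ∧ l.Pairwise (fun a b => a * b = b) := by
  suffices h : ∀ (N : ℕ) (F : Finset S), F.card = N → (∀ s ∈ F, s ∈ T) →
      ∃ l : List S, l.Nodup ∧ (∀ s, s ∈ l ↔ s ∈ F) ∧ l.Pairwise (fun a b => a * b = b) by
    obtain ⟨l, h1, h2, h3⟩ := h T.toFinset.card T.toFinset rfl (fun s hs => List.mem_toFinset.mp hs)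
    exact ⟨l, h1, fun s => (h2 s).trans List.mem_toFinset, h3⟩
  intro N
  induction N with
  | zero =>
    intro F hcard _
    rw [Finset.card_eq_zero] at hcard
    subst hcard
    exact ⟨[], by simp⟩
  | succ N ih =>
    intro F hcard hsubT
    have hne : F.Nonempty := Finset.card_pos.mp (by omega)
    obtain ⟨z, hzF, hzmax⟩ := exists_max hfin hlen hfree F hsubT hne
    obtain ⟨l, h1, h2, h3⟩ := ih (F.erase z) (by rw [Finset.card_erase_of_mem hzF]; omega)
      (fun s hs => hsubT s (Finset.mem_of_mem_erase hs))
    refine ⟨l ++ [z], ?_, ?_, ?_⟩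
    · rw [List.nodup_append]
      exact ⟨h1, List.nodup_singleton z, by
        intro a hal
        simp only [List.mem_singleton]
        intro _ hb h
        subst hb
        subst h
        exact (Finset.notMem_erase a F) ((h2 a).mp hal)⟩
    · intro s
      simp only [List.mem_append, List.mem_singleton, h2, Finset.mem_erase]
      constructor
      · rintro (⟨-, h⟩ | rfl) <;> [exact h; exact hzF]
      · intro h
        by_cases hs : s = z
        · exact Or.inr hs
        · exact Or.inl ⟨hs, h⟩
    · rw [List.pairwise_append]
      refine ⟨h3, List.pairwise_singleton _ _, ?_⟩
      intro a hal b hb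
      rw [List.mem_singleton] at hb
      subst hb
      have := (h2 a).mp hal
      rw [Finset.mem_erase] at this
      exact hzmax a this.2 this.1

end Main

section Count
open List
variable {S : Type*} [Semigroup S] [DecidableEq S] {T : List S}

theorem replicate_count_subperm {x : S} (hx : x ∈ T) :
    List.replicate (T.count x) x <+~ T := by
  rw [List.subperm_ext_iff]
  intro a ha
  rw [List.eq_of_mem_replicate ha]
  simp

theorem piSet_replicate (x : S) (m : ℕ) :
    PiSet (List.replicate m x) = pow1 x '' {j | j < m} := by
  ext s
  rw [mem_piSet_iff]
  constructor
  · rintro ⟨a, l, hsub, rfl⟩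
    obtain ⟨u, hperm, husub⟩ := hsub
    obtain ⟨j, hj, rfl⟩ := List.sublist_replicate_iff.mp husub
    have : a :: l = List.replicate j x := List.perm_replicate.mp hperm.symm
    have hlen : l.length + 1 = j := by
      have := congrArg List.length this
      simpa using this
    have ha : a = x := by
      have : a ∈ List.replicate j x := this ▸ List.mem_cons_self (a := a) (l := l)
      exact List.eq_of_mem_replicate this
    have hl : l = List.replicate l.length x :=
      List.eq_replicate_length.mpr
        (fun b hb => List.eq_of_mem_replicate (this ▸ List.mem_cons_of_mem a hb))
    refine ⟨l.length, by simp only [Set.mem_setOf_eq]; omega, ?_⟩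
    conv_rhs => rw [ha, hl]
    rw [sprod_replicate]
  · rintro ⟨j, hj, rfl⟩
    simp only [Set.mem_setOf_eq] at hj
    refine ⟨x, List.replicate j x, ?_, sprod_replicate x j⟩
    have h3 : x :: List.replicate j x = List.replicate (j + 1) x := by
      rw [List.replicate_succ]
    rw [h3]
    exact (List.replicate_sublist_replicate x |>.mpr (by omega)).subperm

theorem count_injOn (hfin : {x : S | x * x ≠ x}.Finite)
    (hlen : T.length = {x : S | x * x ≠ x}.ncard)
    (hfree : PiSet T ∩ {e : S | e * e = e} = ∅)
    {x : S} (hx : x ∈ T) : Set.InjOn (pow1 x) ↑(Finset.range (T.count x)) := by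
  set m := T.count x
  have hcard : (PiSet (List.replicate m x)).ncard = m := by
    rw [card_piSet_eq hfin hlen hfree (replicate_count_subperm hx)]
    simp [m]
  rw [piSet_replicate] at hcard
  have himg : pow1 x '' {j | j < m} = ↑((Finset.range m).image (pow1 x)) := by
    rw [Finset.coe_image, Finset.coe_range]
    rfl
  rw [himg, Set.ncard_coe_finset] at hcard
  exact Finset.card_image_iff.mp (by rw [hcard]; simp)

/-- the index-mod lemma: powers ≥ q agree iff exponents agree mod p -/
theorem hip_mod {x : S} {r p : ℕ} (hip : HasIndexPeriod x r p) {c d : ℕ}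
    (h : pow1 x ((r-1) + c) = pow1 x ((r-1) + d)) : c % p = d % p := by
  have hp := hip_ppos hip
  have hc : pow1 x ((r-1) + c) = pow1 x ((r-1) + c % p) := by
    conv_lhs => rw [show (r-1) + c = (r-1) + c % p + (c / p) * p by
      have h1 := Nat.mod_add_div c p
      have h2 : c / p * p = p * (c / p) := Nat.mul_comm _ _
      omega]
    rw [hip_per_k hip]
  have hd : pow1 x ((r-1) + d) = pow1 x ((r-1) + d % p) := by
    conv_lhs => rw [show (r-1) + d = (r-1) + d % p + (d / p) * p by
      have h1 := Nat.mod_add_div d p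
      have h2 : d / p * p = p * (d / p) := Nat.mul_comm _ _
      omega]
    rw [hip_per_k hip]
  have heq : pow1 x ((r-1) + c % p) = pow1 x ((r-1) + d % p) := by rw [← hc, ← hd, h]
  by_contra hne
  rcases Nat.lt_or_ge (c % p) (d % p) with hlt | hge
  · exact hip_inj hip (by omega) (by have := Nat.mod_lt d hp; omega) heq
  · have hlt : d % p < c % p := by omega
    exact hip_inj hip (by omega) (by have := Nat.mod_lt c hp; omega) heq.symm

variable (R P : S → ℕ)

/-- the non-idempotent part of the cyclic semigroup generated by s, as a Finset -/
def GS (s : S) : Finset S :=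
  ((Finset.range ((R s - 1) + P s)).image (pow1 s)).filter (fun y => y * y ≠ y)

variable (hRP : ∀ s : S, HasIndexPeriod s (R s) (P s))

section
include hRP

theorem W_card (s : S) : ((Finset.range ((R s - 1) + P s)).image (pow1 s)).card
    = (R s - 1) + P s := by
  rw [Finset.card_image_iff.mpr, Finset.card_range]
  intro a ha b hb hab
  simp only [Finset.coe_range, Set.mem_Iio] at ha hb
  by_contra hne
  rcases Nat.lt_or_ge a b with h | h
  · exact hip_inj (hRP s) h hb hab
  · exact hip_inj (hRP s) (by omega) ha hab.symm

theorem GS_eq_erase (s : S) :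
    ∃ e, e ∈ ((Finset.range ((R s - 1) + P s)).image (pow1 s)) ∧ e * e = e ∧
      (∀ j, pow1 s j * pow1 s j = pow1 s j → pow1 s j = e) ∧
      GS R P s = ((Finset.range ((R s - 1) + P s)).image (pow1 s)).erase e := by
  obtain ⟨a₀, ha₀pos, ha₀dvd, ha₀ge, hidem⟩ := hip_idem_ex (hRP s)
  obtain ⟨m', hm', hm'eq⟩ := hip_reduce (hRP s) (a₀ - 1)
  refine ⟨pow1 s (a₀ - 1), ?_, hidem, fun j hj => idem_pow_unique hj hidem, ?_⟩
  · rw [hm'eq]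
    exact Finset.mem_image_of_mem _ (Finset.mem_range.mpr hm')
  · ext y
    simp only [GS, Finset.mem_filter, Finset.mem_erase]
    constructor
    · rintro ⟨hyW, hyni⟩
      exact ⟨fun h => hyni (h ▸ hidem), hyW⟩
    · rintro ⟨hyne, hyW⟩
      refine ⟨hyW, fun hyy => hyne ?_⟩
      obtain ⟨j, -, rfl⟩ := Finset.mem_image.mp hyW
      exact idem_pow_unique hyy hidem

theorem GS_card (s : S) : (GS R P s).card = (R s - 1) + P s - 1 := by
  obtain ⟨e, heW, -, -, hG⟩ := GS_eq_erase R P hRP s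
  rw [hG, Finset.card_erase_of_mem heW, W_card R P hRP s]

end

theorem count_le_GS (hfin : {x : S | x * x ≠ x}.Finite)
    (hlen : T.length = {x : S | x * x ≠ x}.ncard)
    (hfree : PiSet T ∩ {e : S | e * e = e} = ∅)
    (hRP : ∀ s : S, HasIndexPeriod s (R s) (P s))
    {x : S} (hx : x ∈ T) :
    (Finset.range (T.count x)).image (pow1 x) ⊆ GS R P x ∧
      T.count x ≤ (GS R P x).card ∧ T.count x ≤ (R x - 1) + P x := by
  set m := T.count x with hm
  set q := R x - 1
  set p := P x
  have hinj := count_injOn hfin hlen hfree hx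
  have hp0 : 0 < p := hip_ppos (hRP x)
  have hmle : m ≤ q + p := by
    by_contra hgt
    push_neg at hgt
    have h1 : pow1 x (q + p + 0) = pow1 x (q + 0) := hip_per (hRP x) 0
    have h2 : q + p = q := hinj (by simp only [Finset.coe_range, Set.mem_Iio]; omega)
      (by simp only [Finset.coe_range, Set.mem_Iio]; omega) (by simpa using h1)
    omega
  have hsubG : (Finset.range m).image (pow1 x) ⊆ GS R P x := by
    intro y hy
    obtain ⟨j, hj, rfl⟩ := Finset.mem_image.mp hy
    rw [Finset.mem_range] at hj
    have hni : pow1 x j * pow1 x j ≠ pow1 x j := by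
      apply piSet_T_subset hfree
      apply piSet_mono (replicate_count_subperm hx)
      rw [piSet_replicate]
      exact ⟨j, hj, rfl⟩
    simp only [GS, Finset.mem_filter]
    exact ⟨Finset.mem_image_of_mem _ (Finset.mem_range.mpr (by omega)), hni⟩
  refine ⟨hsubG, ?_, hmle⟩
  calc m = ((Finset.range m).image (pow1 x)).card := by
        rw [Finset.card_image_iff.mpr hinj, Finset.card_range]
  _ ≤ (GS R P x).card := Finset.card_le_card hsubG

theorem GS_disjoint (hfin : {x : S | x * x ≠ x}.Finite)
    (hlen : T.length = {x : S | x * x ≠ x}.ncard)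
    (hfree : PiSet T ∩ {e : S | e * e = e} = ∅)
    {x y : S} (hx : x ∈ T) (hy : y ∈ T) (hne : x ≠ y) :
    Disjoint (GS R P x) (GS R P y) := by
  rw [Finset.disjoint_left]
  rintro v hvx hvy
  simp only [GS, Finset.mem_filter] at hvx hvy
  obtain ⟨hvxW, hvni⟩ := hvx
  obtain ⟨hvyW, -⟩ := hvy
  obtain ⟨a, -, ha⟩ := Finset.mem_image.mp hvxW
  obtain ⟨b, -, hb⟩ := Finset.mem_image.mp hvyW
  obtain ⟨hcomm, hor⟩ := pair_comm hfin hlen hfree hx hy hne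
  apply hvni
  rcases hor with h | h
  · -- x * y = x , y * x = x : x dominant
    calc v * v = pow1 y b * pow1 x a := by rw [hb, ha]
    _ = pow1 x a := absorb_left' (show y * x = x by rw [← hcomm]; exact h) b a
    _ = v := ha
  · -- x * y = y : y dominant
    calc v * v = pow1 x a * pow1 y b := by rw [ha, hb]
    _ = pow1 y b := absorb_left' h a b
    _ = v := hb

end Count

section Final
variable {S : Type*} [Semigroup S] [DecidableEq S] {T : List S}
variable (R P : S → ℕ)

theorem count_eq_GS_card (hfin : {x : S | x * x ≠ x}.Finite)
    (hlen : T.length = {x : S | x * x ≠ x}.ncard)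
    (hfree : PiSet T ∩ {e : S | e * e = e} = ∅)
    (hRP : ∀ s : S, HasIndexPeriod s (R s) (P s)) :
    ∀ x ∈ T, T.count x = (GS R P x).card := by
  have hsum1 : ∑ s ∈ T.toFinset, T.count s = T.length := by
    have := Multiset.toFinset_sum_count_eq (↑T : Multiset S)
    simpa using this
  have hdisj : ∀ a ∈ T.toFinset, ∀ b ∈ T.toFinset, a ≠ b →
      Disjoint (GS R P a) (GS R P b) := by
    intro a ha b hb hab
    exact GS_disjoint R P hfin hlen hfree (List.mem_toFinset.mp ha) (List.mem_toFinset.mp hb) hab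
  have hbi : (T.toFinset.biUnion (GS R P)).card = ∑ s ∈ T.toFinset, (GS R P s).card :=
    Finset.card_biUnion hdisj
  have hsubN : T.toFinset.biUnion (GS R P) ⊆ hfin.toFinset := by
    intro y hy
    obtain ⟨s, -, hyG⟩ := Finset.mem_biUnion.mp hy
    simp only [GS, Finset.mem_filter] at hyG
    exact (Set.Finite.mem_toFinset hfin).mpr hyG.2
  have hNcard : hfin.toFinset.card = T.length := by
    rw [hlen, Set.ncard_eq_toFinset_card _ hfin]
  have hle : ∀ s ∈ T.toFinset, T.count s ≤ (GS R P s).card := fun s hs =>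
    (count_le_GS R P hfin hlen hfree hRP (List.mem_toFinset.mp hs)).2.1
  have hsums : ∑ s ∈ T.toFinset, (GS R P s).card ≤ ∑ s ∈ T.toFinset, T.count s := by
    rw [hsum1, ← hbi, ← hNcard]
    exact Finset.card_le_card hsubN
  intro x hx
  by_contra hne
  have hlt : T.count x < (GS R P x).card :=
    lt_of_le_of_ne (hle x (List.mem_toFinset.mpr hx)) hne
  have := Finset.sum_lt_sum hle ⟨x, List.mem_toFinset.mpr hx, hlt⟩
  omega

theorem r_mod_one (hfin : {x : S | x * x ≠ x}.Finite)
    (hlen : T.length = {x : S | x * x ≠ x}.ncard)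
    (hfree : PiSet T ∩ {e : S | e * e = e} = ∅)
    (hRP : ∀ s : S, HasIndexPeriod s (R s) (P s))
    {x : S} (hx : x ∈ T) (hcnt : T.count x = (GS R P x).card) :
    R x ≡ 1 [MOD P x] := by
  set m := T.count x with hmdef
  set q := R x - 1 with hq
  set p := P x with hpd
  have hr1 : 0 < R x := hip_rpos (hRP x)
  have hp1 : 0 < p := hip_ppos (hRP x)
  have hGcard : (GS R P x).card = q + p - 1 := GS_card R P hRP x
  have hm : m = q + p - 1 := by rw [hcnt, hGcard]
  obtain ⟨hsubG, -, -⟩ := count_le_GS R P hfin hlen hfree hRP hx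
  have himg_card : ((Finset.range m).image (pow1 x)).card = m := by
    rw [Finset.card_image_iff.mpr (count_injOn hfin hlen hfree hx), Finset.card_range]
  have himg_eq : (Finset.range m).image (pow1 x) = GS R P x :=
    Finset.eq_of_subset_of_card_le hsubG (by omega)
  -- the idempotent power
  obtain ⟨a₀, ha₀pos, ha₀dvd, ha₀ge, hidem⟩ := hip_idem_ex (hRP x)
  obtain ⟨m', hm'lt, hm'eq⟩ := hip_reduce (hRP x) (a₀ - 1)
  have hm'ge : m ≤ m' := by
    by_contra hlt
    push_neg at hlt
    have : pow1 x (a₀ - 1) ∈ GS R P x := by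
      rw [← himg_eq, hm'eq]
      exact Finset.mem_image_of_mem _ (Finset.mem_range.mpr hlt)
    simp only [GS, Finset.mem_filter] at this
    exact this.2 hidem
  have hm' : m' = q + p - 1 := by omega
  -- apply the mod lemma
  have hmod : (a₀ - 1 - q) % p = (p - 1) % p := by
    apply hip_mod (hRP x)
    rw [show q + (a₀ - 1 - q) = a₀ - 1 by omega, show q + (p - 1) = q + p - 1 by omega, ← hm']
    exact hm'eq
  rw [Nat.mod_eq_of_lt (by omega : p - 1 < p)] at hmod
  -- derive p ∣ q
  obtain ⟨u, hu⟩ := ha₀dvd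
  rw [← hpd] at hu
  set c := a₀ - 1 - q with hc
  have hA := Nat.mod_add_div c p
  set A := c / p with hA'
  have hmulsucc : p * (A + 1) = p * A + p := Nat.mul_succ p A
  have hqeq : q = p * u - p * (A + 1) := by omega
  have hdvdq : p ∣ q := hqeq ▸ Nat.dvd_sub (Dvd.intro u rfl) (Dvd.intro (A + 1) rfl)
  have : (1 : ℕ) ≡ R x [MOD p] := (Nat.modEq_iff_dvd' (by omega)).mpr (by
    rw [show R x - 1 = q from rfl]; exact hdvdq)
  exact this.symm

end Final


/-- Necessity of the main theorem: the structure of an idempotent-product free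
sequence `T` of maximal length `|S \ E(S)|`. -/
theorem stmt_13 {S : Type*} [Semigroup S] [Nonempty S] [DecidableEq S]
    (hfin : {x : S | x * x ≠ x}.Finite)
    (T : List S) (hlen : T.length = {x : S | x * x ≠ x}.ncard)
    (hfree : PiSet T ∩ {e : S | e * e = e} = ∅) :
    ∃ (k : ℕ) (x : Fin k → S), Function.Injective x ∧
      (∀ s : S, s ∈ T ↔ ∃ i, s = x i) ∧
      ((Subsemigroup.closure {s : S | s ∈ T} : Set S)
        = ⋃ i, Set.range (pow1 (x i))) ∧
      (∀ a ∈ Subsemigroup.closure {s : S | s ∈ T},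
        ∀ b ∈ Subsemigroup.closure {s : S | s ∈ T}, a * b = b * a) ∧
      (∀ i j, i < j → x i * x j = x j) ∧
      (∀ i j, i ≠ j →
        {y ∈ Set.range (pow1 (x i)) | y * y ≠ y}
          ∩ {y ∈ Set.range (pow1 (x j)) | y * y ≠ y} = ∅) ∧
      (∀ s : S, s ∉ (Subsemigroup.closure {s : S | s ∈ T} : Set S) → s * s = s) ∧
      (∀ i, (Set.range (pow1 (x i))).Finite ∧
        ∃ r p : ℕ, HasIndexPeriod (x i) r p ∧ r ≡ 1 [MOD p] ∧
          T.count (x i) = r + p - 2) := by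
  classical
  obtain ⟨l, hnodup, hmem, hpw⟩ := exists_chain hfin hlen hfree
  choose R P hRP using fun s : S => exists_hasIndexPeriod hfin s
  set g : Fin l.length → S := fun i => l.get i with hg
  have hgetT : ∀ i, g i ∈ T := fun i => (hmem _).mp (by rw [hg]; exact l.get_mem _)
  have hinj : Function.Injective g := List.nodup_iff_injective_get.mp hnodup
  have hij : ∀ i j : Fin l.length, i < j → g i * g j = g j := fun i j h =>
    List.pairwise_iff_get.mp hpw i j h
  have habs : ∀ i j : Fin l.length, i < j → g i * g j = g j ∧ g j * g i = g j := by
    intro i j h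
    have h1 := hij i j h
    have hcomm := (pair_comm hfin hlen hfree (hgetT i) (hgetT j)
      (fun he => (ne_of_lt h) (hinj he))).1
    exact ⟨h1, by rw [← hcomm]; exact h1⟩
  have hpowmem : ∀ (i : Fin l.length) (c : ℕ),
      pow1 (g i) c ∈ Subsemigroup.closure {s : S | s ∈ T} := by
    intro i c
    induction c with
    | zero => exact Subsemigroup.subset_closure (hgetT i)
    | succ c ih => exact Subsemigroup.mul_mem _ ih (Subsemigroup.subset_closure (hgetT i))
  have hclosure : (Subsemigroup.closure {s : S | s ∈ T} : Set S)
      = ⋃ i, Set.range (pow1 (g i)) := by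
    apply Set.Subset.antisymm
    · intro s hs
      induction hs using Subsemigroup.closure_induction with
      | mem s hsT =>
        obtain ⟨i, hi⟩ := List.mem_iff_get.mp ((hmem s).mpr hsT)
        exact Set.mem_iUnion.mpr ⟨i, 0, hi⟩
      | mul a b ha hb iha ihb =>
        obtain ⟨i, c, hic⟩ := Set.mem_iUnion.mp iha
        obtain ⟨j, d, hjd⟩ := Set.mem_iUnion.mp ihb
        rcases lt_trichotomy i j with hlt | heq | hgt
        · refine Set.mem_iUnion.mpr ⟨j, d, ?_⟩
          rw [← hic, ← hjd, absorb_left' (habs i j hlt).1]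
        · subst heq
          refine Set.mem_iUnion.mpr ⟨i, c + d + 1, ?_⟩
          rw [← hic, ← hjd, pow1_add]
        · refine Set.mem_iUnion.mpr ⟨i, c, ?_⟩
          rw [← hic, ← hjd, absorb_right' (habs j i hgt).2]
    · rw [Set.iUnion_subset_iff]
      rintro i y ⟨c, rfl⟩
      exact hpowmem i c
  have hcomm : ∀ a ∈ Subsemigroup.closure {s : S | s ∈ T},
      ∀ b ∈ Subsemigroup.closure {s : S | s ∈ T}, a * b = b * a := by
    intro a ha b hb
    rw [← SetLike.mem_coe, hclosure] at ha hb
    obtain ⟨i, c, hic⟩ := Set.mem_iUnion.mp ha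
    obtain ⟨j, d, hjd⟩ := Set.mem_iUnion.mp hb
    rcases lt_trichotomy i j with hlt | heq | hgt
    · rw [← hic, ← hjd, absorb_left' (habs i j hlt).1, absorb_right' (habs i j hlt).2]
    · subst heq
      rw [← hic, ← hjd, ← pow1_add, ← pow1_add]
      congr 1
      omega
    · rw [← hic, ← hjd, absorb_left' (habs j i hgt).1, absorb_right' (habs j i hgt).2]
  refine ⟨l.length, g, hinj, ?_, hclosure, hcomm, fun i j h => hij i j h, ?_, ?_, ?_⟩
  · -- membership
    intro s
    rw [← hmem s, List.mem_iff_get]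
    exact ⟨fun ⟨i, hi⟩ => ⟨i, hi.symm⟩, fun ⟨i, hi⟩ => ⟨i, hi.symm⟩⟩
  · -- disjointness
    intro i j hne
    rw [Set.eq_empty_iff_forall_notMem]
    rintro y ⟨⟨⟨a, ha⟩, hni⟩, ⟨⟨b, hb⟩, -⟩⟩
    apply hni
    rcases lt_or_gt_of_ne hne with hlt | hgt
    · calc y * y = pow1 (g i) a * pow1 (g j) b := by rw [ha, hb]
      _ = pow1 (g j) b := absorb_left' (habs i j hlt).1 a b
      _ = y := hb
    · calc y * y = pow1 (g j) b * pow1 (g i) a := by rw [ha, hb]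
      _ = pow1 (g i) a := absorb_left' (habs j i hgt).1 b a
      _ = y := ha
  · -- outside closure
    intro s hs
    by_contra hss
    apply hs
    apply piSet_subset_closure T
    rw [piSet_T_eq hfin hlen hfree]
    exact hss
  · -- index/period data
    intro i
    refine ⟨range_pow1_finite hfin (g i), R (g i), P (g i), hRP (g i), ?_, ?_⟩
    · exact r_mod_one R P hfin hlen hfree hRP (hgetT i)
        (count_eq_GS_card R P hfin hlen hfree hRP _ (hgetT i))
    · have h1 := count_eq_GS_card R P hfin hlen hfree hRP _ (hgetT i)
      have h2 := GS_card R P hRP (g i)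
      have hr1 : 0 < R (g i) := hip_rpos (hRP (g i))
      have hp1 : 0 < P (g i) := hip_ppos (hRP (g i))
      omega
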